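/- Let 1 ≤ m = n, and let p, q ≥ 0 with p + q = m. Then Sylv^{p,q}(A,B) = C(m−1,q) · f + C(m−1,p) · g, where C(·,·) are binomial coefficients. -/

import Mathlib

open Polynomial Finset

noncomputable section

variable {F : Type*} [Field F]

/-- Coefficient of a polynomial at an integer index (0 for negative indices). -/
def coeffZ (f : F[X]) (z : ℤ) : F := if 0 ≤ z then f.coeff z.toNat else 0

/-- The `(m+n-2k) × (m+n-2k)` matrix `M_k(f,g)` whose determinant is the
`k`-th subresultant of `f` (of degree `m`) and `g` (of degree `n`). -/
def sresM (m n k : ℕ) (f g : F[X]) :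
    Matrix (Fin (m + n - 2*k)) (Fin (m + n - 2*k)) F[X] := fun i j =>
  if (j : ℕ) = m + n - 2*k - 1 then
    if (i : ℕ) < n - k then X ^ (n - k - 1 - (i : ℕ)) * f
    else X ^ (m - k - 1 - ((i : ℕ) - (n - k))) * g
  else
    if (i : ℕ) < n - k then C (coeffZ f ((m : ℤ) + (i : ℕ) - (j : ℕ)))
    else C (coeffZ g ((k : ℤ) + (i : ℕ) - (j : ℕ)))

/-- `M_k(f,g)` with the last column replaced by `(x^{n-k-1},…,x^0,0,…,0)ᵀ`. -/
def sresMF (m n k : ℕ) (f g : F[X]) :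
    Matrix (Fin (m + n - 2*k)) (Fin (m + n - 2*k)) F[X] := fun i j =>
  if (j : ℕ) = m + n - 2*k - 1 then
    if (i : ℕ) < n - k then X ^ (n - k - 1 - (i : ℕ)) else 0
  else sresM m n k f g i j

/-- `M_k(f,g)` with the last column replaced by `(0,…,0,x^{m-k-1},…,x^0)ᵀ`. -/
def sresMG (m n k : ℕ) (f g : F[X]) :
    Matrix (Fin (m + n - 2*k)) (Fin (m + n - 2*k)) F[X] := fun i j =>
  if (j : ℕ) = m + n - 2*k - 1 then
    if (i : ℕ) < n - k then 0 else X ^ (m - k - 1 - ((i : ℕ) - (n - k)))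
  else sresM m n k f g i j

/-- The `k`-th subresultant `Sres_k(f,g)` w.r.t. degrees `m`, `n`. -/
def Sres (m n k : ℕ) (f g : F[X]) : F[X] := (sresM m n k f g).det

/-- The polynomial `F_k(f,g)` w.r.t. degrees `m`, `n`. -/
def Fk (m n k : ℕ) (f g : F[X]) : F[X] := (sresMF m n k f g).det

/-- The polynomial `G_k(f,g)` w.r.t. degrees `m`, `n`. -/
def Gk (m n k : ℕ) (f g : F[X]) : F[X] := (sresMG m n k f g).det

/-- `R(Y,Z) = ∏_{y ∈ Y, z ∈ Z} (y - z)`. -/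
def Rp {ι κ : Type*} (a : ι → F) (b : κ → F) (S : Finset ι) (T : Finset κ) : F :=
  ∏ i ∈ S, ∏ j ∈ T, (a i - b j)

/-- `R(x,Y) = ∏_{y ∈ Y} (x - y)` as a polynomial. -/
def RX {ι : Type*} (a : ι → F) (S : Finset ι) : F[X] :=
  ∏ i ∈ S, (X - C (a i))

/-- Sylvester's double sum `Sylv^{p,q}(A,B)`. -/
def sylv {m n : ℕ} (A : Fin m → F) (B : Fin n → F) (p q : ℕ) : F[X] :=
  ∑ S ∈ (univ : Finset (Fin m)).powersetCard p,
    ∑ T ∈ (univ : Finset (Fin n)).powersetCard q,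
      C ((Rp A B S T * Rp A B Sᶜ Tᶜ) / (Rp A A S Sᶜ * Rp B B T Tᶜ)) *
        (RX A S * RX B T)

end

section Aux

open Polynomial Finset

variable {F : Type*} [Field F]

lemma Rp_ne_zero {ι κ : Type*} {a : ι → F} {b : κ → F} {S : Finset ι} {T : Finset κ}
    (h : ∀ i ∈ S, ∀ j ∈ T, a i ≠ b j) : Rp a b S T ≠ 0 := by
  rw [Rp, Finset.prod_ne_zero_iff]
  intro i hi
  rw [Finset.prod_ne_zero_iff]
  intro j hj
  exact sub_ne_zero.2 (h i hi j hj)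

lemma Rp_ne_zero_of_injOn {ι : Type*} {a : ι → F} {S A T : Finset ι}
    (hA : Set.InjOn a S) (h1 : A ⊆ S) (h2 : T ⊆ S) (hd : ∀ i ∈ A, i ∉ T) :
    Rp a a A T ≠ 0 :=
  Rp_ne_zero fun i hi j hj hij => hd i hi ((hA (h1 hi) (h2 hj) hij) ▸ hj)

lemma Rp_insert_right {ι κ : Type*} [DecidableEq κ] (a : ι → F) (b : κ → F) (S : Finset ι)
    {T : Finset κ} {j : κ} (hj : j ∉ T) :
    Rp a b S (insert j T) = (∏ i ∈ S, (a i - b j)) * Rp a b S T := by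
  simp only [Rp, Finset.prod_insert hj, Finset.prod_mul_distrib]

lemma RX_eval {ι : Type*} (a : ι → F) (S : Finset ι) (x : F) :
    (RX a S).eval x = ∏ i ∈ S, (x - a i) := by
  simp [RX, eval_prod]

lemma RX_monic {ι : Type*} (a : ι → F) (S : Finset ι) : (RX a S).Monic :=
  monic_prod_of_monic _ _ fun i _ => monic_X_sub_C (a i)

lemma RX_natDegree {ι : Type*} (a : ι → F) (S : Finset ι) : (RX a S).natDegree = S.card := by
  rw [RX, natDegree_prod_of_monic _ _ fun i _ => monic_X_sub_C (a i)]
  simp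

/-- Key interpolation lemma: for `S` of cardinality `p + |U|`, `a` injective on `S`,
and `v` of degree at most `p`,
`∑_{A' ⊆ S, |A'| = p} u(A') v(S∖A') / R(A', S∖A') = ∏_{k ∈ U} v(c k)`
where `u = ∏_{k∈U} (X - c k)`. -/
lemma lemJ {ι κ : Type*} [DecidableEq ι] (a : ι → F) (c : κ → F) (v : F[X]) (p : ℕ)
    (U : Finset κ) :
    ∀ S : Finset ι, Set.InjOn a S → S.card = p + U.card → v.natDegree ≤ p →
      ∑ A' ∈ S.powersetCard p,
        (∏ i ∈ A', ∏ k ∈ U, (a i - c k)) * (∏ i ∈ S \ A', v.eval (a i)) / Rp a a A' (S \ A')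
      = ∏ k ∈ U, v.eval (c k) := by
  induction U using Finset.cons_induction with
  | empty =>
    intro S hinj hcard hv
    simp only [Finset.card_empty, Nat.add_zero] at hcard
    rw [← hcard, Finset.powersetCard_self, Finset.sum_singleton]
    simp [Rp, Finset.sdiff_self]
  | cons k U₁ hk IH =>
    intro S hinj hcard hv
    rw [Finset.card_cons] at hcard
    have hpS : p < S.card := by omega
    set t : Finset ι → F := fun A' =>
      (∏ i ∈ A', ∏ k' ∈ U₁, (a i - c k')) * (∏ i ∈ S \ A', v.eval (a i))
        / Rp a a A' (S \ A') with ht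
    set G : F[X] := ∑ A' ∈ S.powersetCard p, C (t A') * ∏ i ∈ A', (C (a i) - X) with hG
    set K : F := ∏ k' ∈ U₁, v.eval (c k') with hK
    -- evaluation of G at the interpolation points
    have hGa : ∀ i₀ ∈ S, G.eval (a i₀) = (C K * v).eval (a i₀) := by
      intro i₀ hi₀
      have hsub : (S.erase i₀).powersetCard p ⊆ S.powersetCard p :=
        Finset.powersetCard_mono (Finset.erase_subset _ _)
      have hvan : ∀ A' ∈ S.powersetCard p, A' ∉ (S.erase i₀).powersetCard p →
          eval (a i₀) (C (t A') * ∏ i ∈ A', (C (a i) - X)) = 0 := by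
        intro A' hA' hA'n
        rw [Finset.mem_powersetCard] at hA'
        have hi₀A : i₀ ∈ A' := by
          by_contra hni
          exact hA'n (Finset.mem_powersetCard.2 ⟨Finset.subset_erase.2 ⟨hA'.1, hni⟩, hA'.2⟩)
        simp only [eval_mul, eval_C, eval_prod, eval_sub, eval_X]
        rw [Finset.prod_eq_zero hi₀A (by ring)]
        ring
      have hkey : ∀ A' ∈ (S.erase i₀).powersetCard p,
          eval (a i₀) (C (t A') * ∏ i ∈ A', (C (a i) - X))
            = v.eval (a i₀) * ((∏ i ∈ A', ∏ k' ∈ U₁, (a i - c k'))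
                * (∏ i ∈ (S.erase i₀) \ A', v.eval (a i))
                / Rp a a A' ((S.erase i₀) \ A')) := by
        intro A' hA'
        rw [Finset.mem_powersetCard] at hA'
        have hni : i₀ ∉ A' := fun h => (Finset.mem_erase.1 (hA'.1 h)).1 rfl
        have hAS : A' ⊆ S := hA'.1.trans (Finset.erase_subset _ _)
        have hsplit : S \ A' = insert i₀ ((S.erase i₀) \ A') := by
          ext x
          simp only [Finset.mem_sdiff, Finset.mem_insert, Finset.mem_erase]
          constructor
          · rintro ⟨hxS, hxA⟩
            by_cases hx : x = i₀
            · exact Or.inl hx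
            · exact Or.inr ⟨⟨hx, hxS⟩, hxA⟩
          · rintro (rfl | ⟨⟨_, hxS⟩, hxA⟩)
            · exact ⟨hi₀, hni⟩
            · exact ⟨hxS, hxA⟩
        have hi₀nd : i₀ ∉ (S.erase i₀) \ A' := fun h =>
          (Finset.mem_erase.1 (Finset.mem_sdiff.1 h).1).1 rfl
        have hE : (∏ i ∈ A', (a i - a i₀)) ≠ 0 := by
          rw [Finset.prod_ne_zero_iff]
          intro i hi
          exact sub_ne_zero.2 fun hee =>
            (Finset.mem_erase.1 (hA'.1 hi)).1 (hinj (hAS hi) hi₀ hee)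
        have hR : Rp a a A' ((S.erase i₀) \ A') ≠ 0 :=
          Rp_ne_zero_of_injOn hinj hAS
            (fun x hx => (Finset.mem_erase.1 (Finset.mem_sdiff.1 hx).1).2)
            (fun i hi hmem => (Finset.mem_sdiff.1 hmem).2 hi)
        simp only [eval_mul, eval_C, eval_prod, eval_sub, eval_X, ht]
        rw [hsplit, Finset.prod_insert hi₀nd, Rp_insert_right a a A' hi₀nd]
        field_simp
      rw [hG, eval_finset_sum, ← Finset.sum_subset hsub hvan, Finset.sum_congr rfl hkey,
        ← Finset.mul_sum]
      have hIH := IH (S.erase i₀) (hinj.mono (by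
          intro x hx
          exact Finset.mem_coe.2 ((Finset.erase_subset _ _) (Finset.mem_coe.1 hx))))
        (by rw [Finset.card_erase_of_mem hi₀]; omega) hv
      rw [hIH, eval_mul, eval_C, mul_comm]
    -- degree bounds
    have hdegG : G.degree < (S.card : WithBot ℕ) := by
      have h1 : G.natDegree ≤ p := by
        apply Polynomial.natDegree_sum_le_of_forall_le
        intro A' hA'
        rw [Finset.mem_powersetCard] at hA'
        refine (natDegree_mul_le).trans ?_
        rw [natDegree_C, Nat.zero_add]
        refine (natDegree_prod_le _ _).trans ?_
        have : ∀ i ∈ A', (C (a i) - X).natDegree ≤ 1 := by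
          intro i _
          have : C (a i) - X = -(X - C (a i)) := by ring
          rw [this, natDegree_neg, natDegree_X_sub_C]
        refine le_trans (Finset.sum_le_sum (g := fun _ => 1) this) ?_
        rw [Finset.sum_const, smul_eq_mul, mul_one, hA'.2]
      calc G.degree ≤ (G.natDegree : WithBot ℕ) := degree_le_natDegree
        _ ≤ (p : WithBot ℕ) := by exact_mod_cast h1
        _ < (S.card : WithBot ℕ) := by exact_mod_cast hpS
    have hdegKv : (C K * v).degree < (S.card : WithBot ℕ) := by
      calc (C K * v).degree ≤ ((C K * v).natDegree : WithBot ℕ) := degree_le_natDegree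
        _ ≤ (p : WithBot ℕ) := by
            have : (C K * v).natDegree ≤ p :=
              (natDegree_mul_le).trans (by rw [natDegree_C, Nat.zero_add]; exact hv)
            exact_mod_cast this
        _ < (S.card : WithBot ℕ) := by exact_mod_cast hpS
    have hGeq : G = C K * v :=
      Polynomial.eq_of_degrees_lt_of_eval_index_eq S hinj hdegG hdegKv hGa
    -- conclude: the sum is G evaluated at c k
    have hLHS : ∑ A' ∈ S.powersetCard p,
        (∏ i ∈ A', ∏ k' ∈ Finset.cons k U₁ hk, (a i - c k'))
          * (∏ i ∈ S \ A', v.eval (a i)) / Rp a a A' (S \ A')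
        = G.eval (c k) := by
      rw [hG, eval_finset_sum]
      refine Finset.sum_congr rfl fun A' _ => ?_
      simp only [eval_mul, eval_C, eval_prod, eval_sub, eval_X, ht, Finset.prod_cons,
        Finset.prod_mul_distrib]
      rw [div_mul_eq_mul_div]
      ring
    rw [hLHS, hGeq, eval_mul, eval_C, Finset.prod_cons, hK]
    ring

/-- The constant double sum: for `|S| = p + q` and `|Sb| ≤ |S|`, the Sylvester-type
double sum of constants equals `choose |Sb| q`. -/
lemma lemT {ι κ : Type*} [DecidableEq ι] [DecidableEq κ] (A : ι → F) (B : κ → F)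
    (S : Finset ι) (Sb : Finset κ) (hA : Set.InjOn A S) (hB : Set.InjOn B Sb)
    (p q : ℕ) (hpq : S.card = p + q) (hb : Sb.card ≤ S.card) :
    ∑ A' ∈ S.powersetCard p, ∑ B' ∈ Sb.powersetCard q,
      Rp A B A' B' * Rp A B (S \ A') (Sb \ B') / (Rp A A A' (S \ A') * Rp B B B' (Sb \ B'))
    = (Sb.card.choose q : F) := by
  rw [Finset.sum_comm]
  by_cases hq : q ≤ Sb.card
  · have hinner : ∀ B' ∈ Sb.powersetCard q,
        ∑ A' ∈ S.powersetCard p,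
          Rp A B A' B' * Rp A B (S \ A') (Sb \ B')
            / (Rp A A A' (S \ A') * Rp B B B' (Sb \ B')) = 1 := by
      intro B' hB'
      rw [Finset.mem_powersetCard] at hB'
      set v : F[X] := ∏ k ∈ Sb \ B', (X - C (B k)) with hv
      have hvdeg : v.natDegree ≤ p := by
        rw [hv, natDegree_prod_of_monic _ _ fun k _ => monic_X_sub_C (B k)]
        simp only [natDegree_X_sub_C, Finset.sum_const, smul_eq_mul, mul_one]
        rw [Finset.card_sdiff_of_subset hB'.1]
        omega
      have hveval : ∀ x : F, v.eval x = ∏ k ∈ Sb \ B', (x - B k) := by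
        intro x; simp [hv, eval_prod]
      have hRB : Rp B B B' (Sb \ B') ≠ 0 :=
        Rp_ne_zero_of_injOn hB hB'.1 (Finset.sdiff_subset)
          (fun i hi hmem => (Finset.mem_sdiff.1 hmem).2 hi)
      have hJ := lemJ A B v p B' S hA (by rw [hpq, hB'.2]) hvdeg
      have step : ∀ A' ∈ S.powersetCard p,
          Rp A B A' B' * Rp A B (S \ A') (Sb \ B')
            / (Rp A A A' (S \ A') * Rp B B B' (Sb \ B'))
          = ((∏ i ∈ A', ∏ k ∈ B', (A i - B k)) * (∏ i ∈ S \ A', v.eval (A i))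
              / Rp A A A' (S \ A')) / Rp B B B' (Sb \ B') := by
        intro A' _
        have h2 : Rp A B (S \ A') (Sb \ B') = ∏ i ∈ S \ A', v.eval (A i) := by
          rw [Rp]
          exact Finset.prod_congr rfl fun i _ => (hveval (A i)).symm
        have h1 : Rp A B A' B' = ∏ i ∈ A', ∏ k ∈ B', (A i - B k) := rfl
        rw [h1, h2, div_div]
      rw [Finset.sum_congr rfl step, ← Finset.sum_div, hJ]
      have : ∏ k ∈ B', v.eval (B k) = Rp B B B' (Sb \ B') := by
        rw [Rp]
        exact Finset.prod_congr rfl fun k _ => hveval (B k)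
      rw [this, div_self hRB]
    rw [Finset.sum_congr rfl hinner, Finset.sum_const, Finset.card_powersetCard, nsmul_eq_mul,
      mul_one]
  · rw [Finset.powersetCard_eq_empty.2 (by omega), Finset.sum_empty,
      Nat.choose_eq_zero_of_lt (by omega), Nat.cast_zero]

lemma sylv_coeff_top {m : ℕ} (A B : Fin m → F) (p q : ℕ) (hpq : p + q = m) :
    (sylv A B p q).coeff m = ∑ S ∈ (univ : Finset (Fin m)).powersetCard p,
      ∑ T ∈ (univ : Finset (Fin m)).powersetCard q,
        Rp A B S T * Rp A B Sᶜ Tᶜ / (Rp A A S Sᶜ * Rp B B T Tᶜ) := by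
  rw [sylv, finset_sum_coeff]
  refine Finset.sum_congr rfl fun S hS => ?_
  rw [finset_sum_coeff]
  refine Finset.sum_congr rfl fun T hT => ?_
  rw [coeff_C_mul]
  have hmon : (RX A S * RX B T).Monic := (RX_monic A S).mul (RX_monic B T)
  have hdeg : (RX A S * RX B T).natDegree = m := by
    rw [(RX_monic A S).natDegree_mul (RX_monic B T), RX_natDegree, RX_natDegree,
      (Finset.mem_powersetCard.1 hS).2, (Finset.mem_powersetCard.1 hT).2, hpq]
  have h1 := hmon.coeff_natDegree
  rw [hdeg] at h1
  rw [h1, mul_one]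

lemma sylv_natDegree_le {m : ℕ} (A B : Fin m → F) (p q : ℕ) (hpq : p + q = m) :
    (sylv A B p q).natDegree ≤ m := by
  apply natDegree_sum_le_of_forall_le
  intro S hS
  apply natDegree_sum_le_of_forall_le
  intro T hT
  refine natDegree_mul_le.trans ?_
  rw [natDegree_C, Nat.zero_add]
  refine natDegree_mul_le.trans ?_
  rw [RX_natDegree, RX_natDegree, (Finset.mem_powersetCard.1 hS).2,
    (Finset.mem_powersetCard.1 hT).2, hpq]

lemma sylv_eval {m : ℕ} (A B : Fin m → F) (hA : Function.Injective A)
    (hB : Function.Injective B) (p q : ℕ) (hpq : p + q = m) (j : Fin m) :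
    (sylv A B p q).eval (B j) = ((m - 1).choose q : F) * (RX A univ).eval (B j) := by
  classical
  set β := B j with hβ
  set U : Finset (Fin m) := univ.erase j with hU
  have hUcard : U.card = m - 1 := by
    rw [hU, Finset.card_erase_of_mem (Finset.mem_univ j), Finset.card_univ, Fintype.card_fin]
  have hsq : (univ : Finset (Fin m)).card = p + q := by
    rw [Finset.card_univ, Fintype.card_fin, hpq]
  rw [sylv]
  simp only [eval_finset_sum, eval_mul, eval_C, RX_eval]
  have hrestrict : ∀ S ∈ (univ : Finset (Fin m)).powersetCard p,
      ∑ T ∈ (univ : Finset (Fin m)).powersetCard q,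
        Rp A B S T * Rp A B Sᶜ Tᶜ / (Rp A A S Sᶜ * Rp B B T Tᶜ)
          * ((∏ i ∈ S, (β - A i)) * ∏ k ∈ T, (β - B k))
      = ∑ T ∈ U.powersetCard q,
        Rp A B S T * Rp A B Sᶜ Tᶜ / (Rp A A S Sᶜ * Rp B B T Tᶜ)
          * ((∏ i ∈ S, (β - A i)) * ∏ k ∈ T, (β - B k)) := by
    intro S _
    refine (Finset.sum_subset (Finset.powersetCard_mono (Finset.erase_subset _ _)) ?_).symm
    intro T hT hTn
    have hjT : j ∈ T := by
      rw [Finset.mem_powersetCard] at hT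
      by_contra hni
      exact hTn (Finset.mem_powersetCard.2 ⟨Finset.subset_erase.2 ⟨hT.1, hni⟩, hT.2⟩)
    rw [Finset.prod_eq_zero hjT (by rw [hβ, sub_self])]
    ring
  rw [Finset.sum_congr rfl hrestrict]
  have hkey : ∀ S ∈ (univ : Finset (Fin m)).powersetCard p, ∀ T ∈ U.powersetCard q,
      Rp A B S T * Rp A B Sᶜ Tᶜ / (Rp A A S Sᶜ * Rp B B T Tᶜ)
        * ((∏ i ∈ S, (β - A i)) * ∏ k ∈ T, (β - B k))
      = Rp A B S (T) * Rp A B (univ \ S) (U \ T)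
          / (Rp A A S (univ \ S) * Rp B B T (U \ T)) * ∏ i ∈ univ, (β - A i) := by
    intro S hS T hT
    rw [Finset.mem_powersetCard] at hS hT
    have hjT : j ∉ T := fun h => (Finset.mem_erase.1 (hT.1 h)).1 rfl
    have hjUT : j ∉ U \ T := fun h => (Finset.mem_erase.1 (Finset.mem_sdiff.1 h).1).1 rfl
    have hTc : Tᶜ = insert j (U \ T) := by
      ext x
      simp only [Finset.mem_compl, Finset.mem_insert, Finset.mem_sdiff, hU, Finset.mem_erase,
        Finset.mem_univ, and_true, true_and]
      by_cases hx : x = j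
      · subst hx; simp [hjT]
      · simp [hx]
    have hScard : Sᶜ.card = q := by
      rw [Finset.card_compl, Fintype.card_fin, hS.2]; omega
    have hsign1 : ∏ i ∈ Sᶜ, (A i - β) = (-1) ^ q * ∏ i ∈ Sᶜ, (β - A i) := by
      rw [Finset.prod_congr rfl (fun i _ => show A i - β = (-1) * (β - A i) by ring),
        Finset.prod_mul_distrib, Finset.prod_const, hScard]
    have hsign2 : ∏ k ∈ T, (B k - β) = (-1) ^ q * ∏ k ∈ T, (β - B k) := by
      rw [Finset.prod_congr rfl (fun k _ => show B k - β = (-1) * (β - B k) by ring),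
        Finset.prod_mul_distrib, Finset.prod_const, hT.2]
    have hd1 : Rp A A S Sᶜ ≠ 0 :=
      Rp_ne_zero fun i _ i' hi' heq => (Finset.mem_compl.1 hi') ((hA heq) ▸ ‹i ∈ S›)
    have hd2 : Rp B B T (U \ T) ≠ 0 :=
      Rp_ne_zero fun k hk k' hk' heq =>
        (Finset.mem_sdiff.1 hk').2 ((hB heq) ▸ hk)
    have hPT : (∏ k ∈ T, (β - B k)) ≠ 0 := by
      rw [Finset.prod_ne_zero_iff]
      intro k hk
      exact sub_ne_zero.2 fun heq => hjT ((hB heq) ▸ hk)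
    have hm1 : ((-1 : F) ^ q) ≠ 0 := pow_ne_zero _ (neg_ne_zero.2 one_ne_zero)
    rw [← Finset.compl_eq_univ_sdiff, hTc, Rp_insert_right A B Sᶜ hjUT,
      Rp_insert_right B B T hjUT, hsign1, hsign2,
      ← Finset.prod_mul_prod_compl S (fun i => β - A i)]
    field_simp
  rw [Finset.sum_congr rfl fun S hS => Finset.sum_congr rfl (hkey S hS)]
  have hBinj : Set.InjOn B ↑U := fun x _ y _ h => hB h
  have hAinj : Set.InjOn A ↑(univ : Finset (Fin m)) := fun x _ y _ h => hA h
  have hUle : U.card ≤ (univ : Finset (Fin m)).card := by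
    rw [hUcard, Finset.card_univ, Fintype.card_fin]
    omega
  have hT := lemT A B univ U hAinj hBinj p q hsq hUle
  have hpull : ∀ S ∈ (univ : Finset (Fin m)).powersetCard p,
      ∑ T ∈ U.powersetCard q, Rp A B S T * Rp A B (univ \ S) (U \ T)
        / (Rp A A S (univ \ S) * Rp B B T (U \ T)) * ∏ i ∈ univ, (β - A i)
      = (∑ T ∈ U.powersetCard q, Rp A B S T * Rp A B (univ \ S) (U \ T)
        / (Rp A A S (univ \ S) * Rp B B T (U \ T))) * ∏ i ∈ univ, (β - A i) :=
    fun S _ => (Finset.sum_mul _ _ _).symm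
  rw [Finset.sum_congr rfl hpull, ← Finset.sum_mul, hT, hUcard]

end Aux

/-- for `1 ≤ m = n` and `p + q = m`,
`Sylv^{p,q}(A,B) = C(m−1,q) f + C(m−1,p) g`. -/
theorem sylvester_double_sum_eq_deg {F : Type*} [Field F] {m : ℕ} (hm : 1 ≤ m)
    (A B : Fin m → F)
    (hA : Function.Injective A) (hB : Function.Injective B)
    (f g : Polynomial F) (hf : f = RX A Finset.univ) (hg : g = RX B Finset.univ)
    (p q : ℕ) (hpq : p + q = m) :
    sylv A B p q
      = ((m - 1).choose q : Polynomial F) * f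
          + ((m - 1).choose p : Polynomial F) * g := by
  classical
  open Polynomial Finset in
  have hAinj : Set.InjOn A ↑(univ : Finset (Fin m)) := fun x _ y _ h => hA h
  have hBinj : Set.InjOn B ↑(univ : Finset (Fin m)) := fun x _ y _ h => hB h
  have hsq : (univ : Finset (Fin m)).card = p + q := by
    rw [Finset.card_univ, Fintype.card_fin, hpq]
  have hfm : f.Monic := hf ▸ RX_monic A univ
  have hgm : g.Monic := hg ▸ RX_monic B univ
  have hfd : f.natDegree = m := by rw [hf, RX_natDegree, Finset.card_univ, Fintype.card_fin]
  have hgd : g.natDegree = m := by rw [hg, RX_natDegree, Finset.card_univ, Fintype.card_fin]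
  rw [← sub_eq_zero]
  set h : Polynomial F := sylv A B p q
    - (((m - 1).choose q : Polynomial F) * f + ((m - 1).choose p : Polynomial F) * g) with hh
  have hpascal : m.choose q = (m - 1).choose q + (m - 1).choose p := by
    obtain ⟨m', rfl⟩ : ∃ m', m = m' + 1 := ⟨m - 1, by omega⟩
    have e1 : m' + 1 - 1 = m' := by omega
    rcases Nat.eq_zero_or_pos q with rfl | hq
    · have hp : p = m' + 1 := by omega
      subst hp
      rw [e1]
      simp [Nat.choose_eq_zero_of_lt (show m' < m' + 1 by omega)]
    · obtain ⟨q', rfl⟩ : ∃ q', q = q' + 1 := ⟨q - 1, by omega⟩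
      have hsymm : m'.choose p = m'.choose q' := by
        have hp : p = m' - q' := by omega
        rw [hp, Nat.choose_symm (by omega : q' ≤ m')]
      rw [e1, Nat.choose_succ_succ, hsymm]
      simp [Nat.succ_eq_add_one]
      omega
  have hcoeff : h.coeff m = 0 := by
    have hTsum : (∑ S ∈ (univ : Finset (Fin m)).powersetCard p,
        ∑ T ∈ (univ : Finset (Fin m)).powersetCard q,
          Rp A B S T * Rp A B Sᶜ Tᶜ / (Rp A A S Sᶜ * Rp B B T Tᶜ)) = (m.choose q : F) := by
      simp only [Finset.compl_eq_univ_sdiff]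
      rw [lemT A B univ univ hAinj hBinj p q hsq le_rfl, Finset.card_univ, Fintype.card_fin]
    have hfc : f.coeff m = 1 := by
      have := hfm.coeff_natDegree
      rwa [hfd] at this
    have hgc : g.coeff m = 1 := by
      have := hgm.coeff_natDegree
      rwa [hgd] at this
    rw [hh, coeff_sub, sylv_coeff_top A B p q hpq, hTsum, coeff_add,
      ← Polynomial.C_eq_natCast, ← Polynomial.C_eq_natCast, coeff_C_mul, coeff_C_mul,
      hfc, hgc, mul_one, mul_one, hpascal]
    push_cast
    ring
  have heval : ∀ j : Fin m, h.eval (B j) = 0 := by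
    intro j
    have hgz : g.eval (B j) = 0 := by
      rw [hg, RX_eval]
      exact Finset.prod_eq_zero (Finset.mem_univ j) (sub_self _)
    rw [hh, eval_sub, sylv_eval A B hA hB p q hpq j, eval_add, eval_mul, eval_mul, hgz, hf]
    simp only [Polynomial.eval_natCast]
    ring
  have hdle : h.natDegree ≤ m := by
    refine (natDegree_sub_le _ _).trans (max_le (sylv_natDegree_le A B p q hpq) ?_)
    refine (natDegree_add_le _ _).trans (max_le ?_ ?_)
    · exact natDegree_mul_le.trans (by rw [Polynomial.natDegree_natCast, hfd]; omega)
    · exact natDegree_mul_le.trans (by rw [Polynomial.natDegree_natCast, hgd]; omega)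
  by_cases hz : h = 0
  · exact hz
  · have hlt : h.natDegree < m := by
      rcases lt_or_eq_of_le hdle with h1 | h1
      · exact h1
      · exfalso
        apply hz
        apply Polynomial.leadingCoeff_eq_zero.1
        rw [Polynomial.leadingCoeff, h1, hcoeff]
    exact Polynomial.eq_zero_of_natDegree_lt_card_of_eval_eq_zero h hB heval
      (by rw [Fintype.card_fin]; exact hlt)
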